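/- arXiv:1802.02370 — 2 statements merged into one kernel-verified Lean document; each statement's English description precedes it below -/
import Mathlib

section
/- Let λ₁, …, λ_r be distinct complex algebraic numbers with |λ_i| ≥ 1 for i = 1, …, r, and let P₁, …, P_r be nonzero polynomials with complex coefficients. Suppose that Σ_{i=1}^r P_i(n) λ_iⁿ is a real number for every n ∈ ℕ, and that ‖Σ_{i=1}^r P_i(n) λ_iⁿ‖ → 0 as n → ∞, where ‖t‖ denotes the distance from the real number t to the nearest integer. Then {λ₁, …, λ_r} is a Pisot family: for every i and every complex root γ of the minimal polynomial of λ_i over ℚ, if γ ∉ {λ₁, …, λ_r} then |γ| < 1. -/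
noncomputable section

open Polynomial Filter Finset

namespace PisotAux

def shiftL : Module.End ℂ (ℕ → ℂ) where
  toFun f := fun n => f (n + 1)
  map_add' := by intros; rfl
  map_smul' := by intros; rfl

def Phi (p : ℂ[X]) : Module.End ℂ (ℕ → ℂ) := Polynomial.aeval shiftL p

lemma shiftL_pow (k : ℕ) : ∀ (f : ℕ → ℂ) (n : ℕ), (shiftL ^ k) f n = f (n + k) := by
  induction k with
  | zero => intro f n; rfl
  | succ k ih =>
    intro f n
    rw [pow_succ, Module.End.mul_apply, ih]
    rfl

lemma Phi_apply (p : ℂ[X]) (f : ℕ → ℂ) (n : ℕ) :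
    Phi p f n = ∑ k ∈ Finset.range (p.natDegree + 1), p.coeff k * f (n + k) := by
  conv_lhs => rw [Phi, p.as_sum_range' (p.natDegree + 1) (lt_add_one _)]
  rw [map_sum, LinearMap.sum_apply, Finset.sum_apply]
  refine Finset.sum_congr rfl fun k _ => ?_
  rw [aeval_monomial, Module.End.mul_apply, Module.algebraMap_end_apply, Pi.smul_apply,
    shiftL_pow, smul_eq_mul]

lemma Phi_mul (p q : ℂ[X]) (f : ℕ → ℂ) : Phi (p * q) f = Phi p (Phi q f) := by
  rw [Phi, map_mul]; rfl

lemma Phi_X_sub_C (a : ℂ) (f : ℕ → ℂ) (n : ℕ) :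
    Phi (X - C a) f n = f (n + 1) - a * f n := by
  rw [Phi, map_sub, aeval_X, aeval_C, LinearMap.sub_apply, Pi.sub_apply,
    Module.algebraMap_end_apply, Pi.smul_apply, smul_eq_mul]
  rfl
lemma natDegree_comp_X_add_C' (P : ℂ[X]) (c : ℂ) :
    (P.comp (X + C c)).natDegree = P.natDegree := by
  rw [natDegree_comp, natDegree_X_add_C, mul_one]

lemma coeff_comp_X_add_C_top (P : ℂ[X]) (c : ℂ) :
    (P.comp (X + C c)).coeff P.natDegree = P.leadingCoeff := by
  by_cases hP : P = 0
  · simp [hP]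
  calc (P.comp (X + C c)).coeff P.natDegree
      = (P.comp (X + C c)).leadingCoeff := by
        rw [leadingCoeff, natDegree_comp_X_add_C']
    _ = P.leadingCoeff := by
        rw [leadingCoeff_comp (by rw [natDegree_X_add_C]; exact one_ne_zero),
          (monic_X_add_C c).leadingCoeff, one_pow, mul_one]

lemma natDegree_comp_sub_le (P : ℂ[X]) {d : ℕ} (h : P.natDegree ≤ d + 1) :
    (P.comp (X + C 1) - P).natDegree ≤ d := by
  rw [natDegree_le_iff_coeff_eq_zero]
  intro m hm
  rw [coeff_sub]
  rcases lt_or_ge P.natDegree m with hlt | hle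
  · rw [coeff_eq_zero_of_natDegree_lt hlt,
      coeff_eq_zero_of_natDegree_lt (by rwa [natDegree_comp_X_add_C']), sub_zero]
  · have hmeq : m = P.natDegree := by omega
    rw [hmeq, coeff_comp_X_add_C_top, leadingCoeff, sub_self]

lemma exists_C_of_comp_eq {S : ℂ[X]} (h : S.comp (X + C 1) = S) : ∃ c : ℂ, S = C c := by
  have key : ∀ n : ℕ, S.eval (n : ℂ) = S.eval 0 := by
    intro n
    induction n with
    | zero => norm_num
    | succ n ih =>
      have h2 : S.eval ((n : ℂ) + 1) = S.eval (n : ℂ) := by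
        conv_rhs => rw [← h]
        rw [eval_comp, eval_add, eval_X, eval_C]
      push_cast
      rw [h2, ih]
  refine ⟨S.eval 0, ?_⟩
  have hz : S - C (S.eval 0) = 0 := by
    apply Polynomial.eq_zero_of_infinite_isRoot
    apply Set.infinite_of_injective_forall_mem (f := fun n : ℕ => (n : ℂ))
      (Nat.cast_injective)
    intro n
    simp only [Set.mem_setOf_eq, IsRoot, eval_sub, eval_C, key n, sub_self]
  linear_combination hz

lemma recovery {a b : ℂ} (hab : a ≠ b) {S : ℂ[X]}
    (h : C a * S.comp (X + C 1) - C b * S = 0) : S = 0 := by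
  by_contra hS
  have hc := congrArg (fun q : ℂ[X] => q.coeff S.natDegree) h
  simp only [coeff_sub, coeff_C_mul, coeff_zero] at hc
  rw [coeff_comp_X_add_C_top, ← leadingCoeff] at hc
  have : (a - b) * S.leadingCoeff = 0 := by ring_nf; linear_combination hc
  rcases mul_eq_zero.mp this with h1 | h2
  · exact hab (sub_eq_zero.mp h1)
  · exact hS (leadingCoeff_eq_zero.mp h2)

lemma Phi_step (a : ℂ) (P : ℂ[X]) :
    Phi (X - C a) (fun n => P.eval (n : ℂ) * a ^ n)
      = fun n : ℕ => (C a * (P.comp (X + C 1) - P)).eval (n : ℂ) * a ^ n := by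
  funext n
  rw [Phi_X_sub_C]
  simp only [eval_mul, eval_C, eval_sub, eval_comp, eval_add, eval_X]
  push_cast
  ring

lemma Phi_kill (a : ℂ) : ∀ (d : ℕ) (P : ℂ[X]), P.natDegree ≤ d →
    Phi ((X - C a) ^ (d + 1)) (fun n => P.eval (n : ℂ) * a ^ n) = 0 := by
  intro d
  induction d with
  | zero =>
    intro P hP
    obtain ⟨c, rfl⟩ : ∃ c, P = C c := ⟨P.coeff 0, Polynomial.eq_C_of_natDegree_le_zero hP⟩
    rw [pow_one, Phi_step]
    funext n
    simp
  | succ d ih =>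
    intro P hP
    rw [pow_succ, Phi_mul, Phi_step]
    exact ih _ (natDegree_C_mul_le _ _ |>.trans (natDegree_comp_sub_le P hP))

lemma Phi_dvd_kill {a : ℂ} {q : ℂ[X]} {d : ℕ} (hdvd : (X - C a) ^ (d + 1) ∣ q)
    {P : ℂ[X]} (hP : P.natDegree ≤ d) :
    Phi q (fun n => P.eval (n : ℂ) * a ^ n) = 0 := by
  obtain ⟨s, rfl⟩ := hdvd
  rw [mul_comm, Phi_mul, Phi_kill a d P hP, map_zero]

def Tr (p : ℂ[X]) (a : ℂ) (P : ℂ[X]) : ℂ[X] :=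
  ∑ k ∈ Finset.range (p.natDegree + 1), C (p.coeff k * a ^ k) * P.comp (X + C (k : ℂ))

lemma Phi_exp (p : ℂ[X]) (a : ℂ) (P : ℂ[X]) :
    Phi p (fun n => P.eval (n : ℂ) * a ^ n)
      = fun n : ℕ => (Tr p a P).eval (n : ℂ) * a ^ n := by
  funext n
  rw [Phi_apply, Tr, eval_finset_sum, Finset.sum_mul]
  refine Finset.sum_congr rfl fun k _ => ?_
  rw [eval_mul, eval_C, eval_comp, eval_add, eval_X, eval_C]
  push_cast
  ring

lemma Tr_ne_zero {p P : ℂ[X]} {a : ℂ} (hP : P ≠ 0) (hp : p.eval a ≠ 0) :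
    Tr p a P ≠ 0 := by
  intro h0
  have hc := congrArg (fun q : ℂ[X] => q.coeff P.natDegree) h0
  simp only [Tr, finset_sum_coeff, coeff_C_mul, coeff_zero] at hc
  have hc2 : ∀ k ∈ Finset.range (p.natDegree + 1),
      p.coeff k * a ^ k * (P.comp (X + C (k : ℂ))).coeff P.natDegree
        = p.coeff k * a ^ k * P.leadingCoeff := by
    intro k _
    rw [coeff_comp_X_add_C_top]
  rw [Finset.sum_congr rfl hc2, ← Finset.sum_mul] at hc
  rw [← Polynomial.eval_eq_sum_range] at hc
  exact mul_ne_zero hp (leadingCoeff_ne_zero.mpr hP) hc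
lemma const_of_tendsto_pow {c a : ℂ} (ha : 1 ≤ ‖a‖)
    (h : Tendsto (fun n : ℕ => c * a ^ n) atTop (nhds 0)) : c = 0 := by
  by_contra hc
  have h2 : ∀ n : ℕ, ‖c‖ ≤ ‖c * a ^ n‖ := by
    intro n
    rw [norm_mul, norm_pow]
    exact le_mul_of_one_le_right (norm_nonneg c) (one_le_pow₀ ha)
  have h3 : Tendsto (fun n : ℕ => ‖c * a ^ n‖) atTop (nhds 0) := by
    simpa using h.norm
  have h4 : ‖c‖ ≤ 0 := ge_of_tendsto h3 (Eventually.of_forall h2)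
  exact hc (norm_eq_zero.mp (le_antisymm h4 (norm_nonneg c)))

lemma delta_tendsto {m : ℕ} (μ : Fin m → ℂ) (S : Fin m → ℂ[X]) (b : ℂ)
    (h : Tendsto (fun n : ℕ => ∑ j, (S j).eval (n : ℂ) * μ j ^ n) atTop (nhds 0)) :
    Tendsto (fun n : ℕ =>
        ∑ j, (C (μ j) * (S j).comp (X + C 1) - C b * S j).eval (n : ℂ) * μ j ^ n)
      atTop (nhds 0) := by
  have h1 : Tendsto (fun n : ℕ =>
      (∑ j, (S j).eval ((n + 1 : ℕ) : ℂ) * μ j ^ (n + 1))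
        - b * ∑ j, (S j).eval (n : ℂ) * μ j ^ n) atTop (nhds 0) := by
    simpa using ((h.comp (tendsto_add_atTop_nat 1)).sub (h.const_mul b))
  apply h1.congr
  intro n
  rw [Finset.mul_sum, ← Finset.sum_sub_distrib]
  refine Finset.sum_congr rfl fun j _ => ?_
  simp only [eval_sub, eval_mul, eval_C, eval_comp, eval_add, eval_X]
  push_cast
  ring

lemma expsum_eq_zero :
    ∀ (m : ℕ) (μ : Fin m → ℂ), Function.Injective μ →
      (∀ j, 1 ≤ ‖μ j‖) → ∀ (S : Fin m → ℂ[X]),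
      Tendsto (fun n : ℕ => ∑ j, (S j).eval (n : ℂ) * μ j ^ n) atTop (nhds 0) →
      ∀ j, S j = 0 := by
  intro m
  induction m with
  | zero => intro μ _ _ S _ j; exact j.elim0
  | succ m IH =>
    suffices H : ∀ (d : ℕ) (μ : Fin (m + 1) → ℂ), Function.Injective μ →
        (∀ j, 1 ≤ ‖μ j‖) → ∀ S : Fin (m + 1) → ℂ[X],
        (S (Fin.last m)).natDegree ≤ d →
        Tendsto (fun n : ℕ => ∑ j, (S j).eval (n : ℂ) * μ j ^ n) atTop (nhds 0) →
        ∀ j, S j = 0 by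
      intro μ hinj hmod S hts j
      exact H (S (Fin.last m)).natDegree μ hinj hmod S le_rfl hts j
    intro d
    induction d with
    | zero =>
      intro μ hinj hmod S hdeg hts
      obtain ⟨c, hc⟩ : ∃ c, S (Fin.last m) = C c :=
        ⟨_, Polynomial.eq_C_of_natDegree_le_zero hdeg⟩
      set T : Fin (m + 1) → ℂ[X] :=
        fun j => C (μ j) * (S j).comp (X + C 1) - C (μ (Fin.last m)) * S j with hT
      have hTlast : T (Fin.last m) = 0 := by
        rw [hT]; simp only [hc, C_comp]; ring
      have htd : Tendsto (fun n : ℕ => ∑ j, (T j).eval (n : ℂ) * μ j ^ n)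
          atTop (nhds 0) := delta_tendsto μ S (μ (Fin.last m)) hts
      have hteq : Tendsto (fun n : ℕ =>
          ∑ j : Fin m, (T (Fin.castSucc j)).eval (n : ℂ) * μ (Fin.castSucc j) ^ n)
          atTop (nhds 0) := by
        apply htd.congr
        intro n
        rw [Fin.sum_univ_castSucc, hTlast]
        simp
      have hTz : ∀ j : Fin m, T (Fin.castSucc j) = 0 :=
        IH (μ ∘ Fin.castSucc) (hinj.comp (Fin.castSucc_injective m))
          (fun j => hmod _) (fun j => T (Fin.castSucc j)) hteq
      have hSz : ∀ j : Fin m, S (Fin.castSucc j) = 0 := by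
        intro j
        refine recovery (a := μ (Fin.castSucc j)) (b := μ (Fin.last m)) ?_ (hTz j)
        exact fun he => absurd (hinj he) (Fin.ne_of_lt (Fin.castSucc_lt_last j))
      have hclast : c = 0 := by
        apply const_of_tendsto_pow (hmod (Fin.last m))
        apply hts.congr
        intro n
        rw [Fin.sum_univ_castSucc]
        simp only [hSz, eval_zero, zero_mul, Finset.sum_const_zero, zero_add, hc, eval_C]
      intro j
      refine Fin.lastCases ?_ ?_ j
      · rw [hc, hclast, map_zero]
      · exact hSz
    | succ d IHd =>
      intro μ hinj hmod S hdeg hts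
      set T : Fin (m + 1) → ℂ[X] :=
        fun j => C (μ j) * (S j).comp (X + C 1) - C (μ (Fin.last m)) * S j with hT
      have hTlast : T (Fin.last m)
          = C (μ (Fin.last m)) * ((S (Fin.last m)).comp (X + C 1) - S (Fin.last m)) := by
        rw [hT]; ring
      have hTdeg : (T (Fin.last m)).natDegree ≤ d := by
        rw [hTlast]
        exact (natDegree_C_mul_le _ _).trans (natDegree_comp_sub_le _ hdeg)
      have htd : Tendsto (fun n : ℕ => ∑ j, (T j).eval (n : ℂ) * μ j ^ n)
          atTop (nhds 0) := delta_tendsto μ S (μ (Fin.last m)) hts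
      have hTz : ∀ j, T j = 0 := IHd μ hinj hmod T hTdeg htd
      have hSz : ∀ j : Fin m, S (Fin.castSucc j) = 0 := by
        intro j
        refine recovery (a := μ (Fin.castSucc j)) (b := μ (Fin.last m)) ?_ (hTz _)
        exact fun he => absurd (hinj he) (Fin.ne_of_lt (Fin.castSucc_lt_last j))
      have hcomp : (S (Fin.last m)).comp (X + C 1) = S (Fin.last m) := by
        have h0 := hTz (Fin.last m)
        rw [hTlast] at h0
        rcases mul_eq_zero.mp h0 with h1 | h2
        · exfalso
          have h1' : μ (Fin.last m) = 0 := C_eq_zero.mp h1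
          have hm1 := hmod (Fin.last m)
          rw [h1', norm_zero] at hm1
          linarith
        · exact sub_eq_zero.mp h2
      obtain ⟨c, hc⟩ := exists_C_of_comp_eq hcomp
      have hclast : c = 0 := by
        apply const_of_tendsto_pow (hmod (Fin.last m))
        apply hts.congr
        intro n
        rw [Fin.sum_univ_castSucc]
        simp only [hSz, eval_zero, zero_mul, Finset.sum_const_zero, zero_add, hc, eval_C]
      intro j
      refine Fin.lastCases ?_ ?_ j
      · rw [hc, hclast, map_zero]
      · exact hSz

lemma snoc_injective {m : ℕ} {μ : Fin m → ℂ} {γ : ℂ} (h : Function.Injective μ)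
    (hγ : γ ∉ Set.range μ) : Function.Injective (Fin.snoc μ γ : Fin (m + 1) → ℂ) := by
  intro j1 j2 he
  by_cases h1 : j1 = Fin.last m <;> by_cases h2 : j2 = Fin.last m
  · rw [h1, h2]
  · obtain ⟨i2, rfl⟩ := Fin.exists_castSucc_eq.mpr h2
    subst h1
    rw [Fin.snoc_last, Fin.snoc_castSucc] at he
    exact absurd ⟨i2, he.symm⟩ hγ
  · obtain ⟨i1, rfl⟩ := Fin.exists_castSucc_eq.mpr h1
    subst h2
    rw [Fin.snoc_last, Fin.snoc_castSucc] at he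
    exact absurd ⟨i1, he⟩ hγ
  · obtain ⟨i1, rfl⟩ := Fin.exists_castSucc_eq.mpr h1
    obtain ⟨i2, rfl⟩ := Fin.exists_castSucc_eq.mpr h2
    rw [Fin.snoc_castSucc, Fin.snoc_castSucc] at he
    rw [h he]
lemma tendsto_Phi_null {f : ℕ → ℂ} (hf : Tendsto f atTop (nhds 0)) (p : ℂ[X]) :
    Tendsto (fun n => Phi p f n) atTop (nhds 0) := by
  have : Tendsto (fun n => ∑ k ∈ Finset.range (p.natDegree + 1), p.coeff k * f (n + k))
      atTop (nhds 0) := by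
    have h0 : (0 : ℂ) = ∑ k ∈ Finset.range (p.natDegree + 1), p.coeff k * 0 := by simp
    rw [h0]
    apply tendsto_finset_sum
    intro k _
    exact (hf.comp (tendsto_add_atTop_nat k)).const_mul _
  exact this.congr fun n => (Phi_apply p f n).symm

lemma rat_int_eventually_zero {s : ℕ → ℚ} {D : ℤ} (hD : 0 < D)
    (hint : ∀ n, ∃ z : ℤ, (z : ℚ) = D * s n)
    (h : Tendsto (fun n => ((s n : ℚ) : ℂ)) atTop (nhds 0)) :
    ∃ N, ∀ n ≥ N, s n = 0 := by
  have h2 : Tendsto (fun n => |(s n : ℝ)|) atTop (nhds 0) := by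
    have := h.norm
    simp only [norm_zero] at this
    apply this.congr
    intro n
    rw [Complex.norm_ratCast]
  have h3 : ∀ᶠ n in atTop, |(s n : ℝ)| < 1 / D :=
    h2.eventually_lt_const (by positivity)
  rw [eventually_atTop] at h3
  obtain ⟨N, hN⟩ := h3
  refine ⟨N, fun n hn => ?_⟩
  obtain ⟨z, hz⟩ := hint n
  have hzabs : |(z : ℝ)| < 1 := by
    have : (z : ℝ) = D * (s n : ℝ) := by exact_mod_cast congrArg (fun q : ℚ => (q : ℝ)) hz
    rw [this, abs_mul, abs_of_pos (by exact_mod_cast hD : (0:ℝ) < (D:ℝ))]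
    calc (D : ℝ) * |(s n : ℝ)| < (D : ℝ) * (1 / D) := by
          apply mul_lt_mul_of_pos_left (hN n hn) (by exact_mod_cast hD)
      _ = 1 := by field_simp
  have hz0 : z = 0 := by
    have h5 : |z| < 1 := by exact_mod_cast hzabs
    rw [abs_lt] at h5
    omega
  have : (0 : ℚ) = D * s n := by rw [← hz, hz0, Int.cast_zero]
  have hD' : (D : ℚ) ≠ 0 := by exact_mod_cast hD.ne'
  field_simp at this
  exact (mul_eq_zero.mp this.symm).resolve_left hD'
lemma den_dvd_int {c : ℚ} {D : ℤ} (h : (c.den : ℤ) ∣ D) : ∃ z : ℤ, (z : ℚ) = D * c := by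
  obtain ⟨t, ht⟩ := h
  refine ⟨c.num * t, ?_⟩
  have hden : (c.den : ℚ) ≠ 0 := by exact_mod_cast c.den_nz
  have hc : (c.den : ℚ) * c = (c.num : ℚ) := Rat.den_mul_eq_num c
  rw [ht]
  push_cast
  calc ((c.num : ℚ)) * (t : ℚ) = ((c.den : ℚ) * c) * t := by rw [hc]
    _ = (c.den : ℚ) * t * c := by ring

lemma exists_rat_ann {d : ℕ} (a : ℕ → ℤ) (N : ℕ) (v : Fin d → ℂ) (hv : v ≠ 0)
    (hann : ∀ n, N ≤ n → ∑ k : Fin d, v k * (a (n + k) : ℂ) = 0) :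
    ∃ q : ℚ[X], q ≠ 0 ∧ q.natDegree < d ∧
      ∀ n, N ≤ n → ∑ k ∈ Finset.range d, q.coeff k * (a (n + k) : ℚ) = 0 := by
  classical
  set u : ℕ → (Fin d → ℚ) := fun n k => (a (n + k) : ℚ) with hu
  set U : Submodule ℚ (Fin d → ℚ) := Submodule.span ℚ {w | ∃ n, N ≤ n ∧ u n = w} with hUdef
  set ℓ : (Fin d → ℚ) →ₗ[ℚ] ℂ :=
    { toFun := fun w => ∑ k, v k * ((w k : ℚ) : ℂ)
      map_add' := by
        intro w1 w2
        rw [← Finset.sum_add_distrib]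
        refine Finset.sum_congr rfl fun k _ => ?_
        simp only [Pi.add_apply]
        push_cast
        ring
      map_smul' := by
        intro c w
        simp only [Pi.smul_apply, smul_eq_mul, RingHom.id_apply, Rat.smul_def,
          Finset.mul_sum]
        refine Finset.sum_congr rfl fun k _ => ?_
        push_cast
        ring } with hldef
  have hker : ∀ w ∈ U, ℓ w = 0 := by
    intro w hw
    have hsub : {w | ∃ n, N ≤ n ∧ u n = w} ⊆ (LinearMap.ker ℓ : Set (Fin d → ℚ)) := by
      rintro w ⟨n, hn, rfl⟩
      have hval : ℓ (u n) = ∑ k : Fin d, v k * ((a (n + k) : ℤ) : ℂ) := by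
        rw [hldef]
        simp only [LinearMap.coe_mk, AddHom.coe_mk]
        push_cast
        rfl
      simp only [SetLike.mem_coe, LinearMap.mem_ker]
      rw [hval, hann n hn]
    exact LinearMap.mem_ker.mp (Submodule.span_le.mpr hsub hw)
  have hsing : ∀ k, ℓ (Pi.single k 1) = v k := by
    intro k
    rw [hldef]
    simp only [LinearMap.coe_mk, AddHom.coe_mk]
    rw [Finset.sum_eq_single k]
    · simp
    · intro j _ hj
      rw [Pi.single_eq_of_ne hj, Rat.cast_zero, mul_zero]
    · intro h
      exact absurd (Finset.mem_univ k) h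
  have hUne : U ≠ ⊤ := by
    intro htop
    apply hv
    funext k
    have hk : (Pi.single k (1 : ℚ) : Fin d → ℚ) ∈ U := htop ▸ Submodule.mem_top
    have := hker _ hk
    rw [hsing k] at this
    exact this
  obtain ⟨f, hf0, hfbot⟩ :=
    U.exists_dual_map_eq_bot_of_lt_top (lt_top_iff_ne_top.mpr hUne) inferInstance
  have hfval : ∀ w ∈ U, f w = 0 := by
    intro w hw
    have : f w ∈ U.map f := ⟨w, hw, rfl⟩
    rw [hfbot] at this
    exact (Submodule.mem_bot ℚ).mp this
  set q : ℚ[X] := ∑ k : Fin d, C (f (Pi.single k 1)) * X ^ (k : ℕ) with hqdef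
  have hqcoeff : ∀ k : Fin d, q.coeff (k : ℕ) = f (Pi.single k 1) := by
    intro k
    rw [hqdef, finset_sum_coeff]
    rw [Finset.sum_eq_single k]
    · simp [coeff_C_mul, coeff_X_pow]
    · intro j _ hj
      have h1 : (j : ℕ) ≠ (k : ℕ) := fun h => hj (Fin.ext h)
      simp [coeff_C_mul, coeff_X_pow, h1, Ne.symm h1]
    · intro h
      exact absurd (Finset.mem_univ k) h
  have hexk : ∃ k : Fin d, f (Pi.single k 1) ≠ 0 := by
    by_contra hall
    push_neg at hall
    apply hf0
    apply LinearMap.ext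
    intro w
    rw [LinearMap.pi_apply_eq_sum_univ f w]
    simp only [LinearMap.zero_apply]
    apply Finset.sum_eq_zero
    intro k _
    have hs : (fun j => if k = j then (1 : ℚ) else 0) = Pi.single k 1 := by
      funext j
      rw [Pi.single_apply]
      simp [eq_comm]
    rw [hs, hall k, smul_zero]
  obtain ⟨k0, hk0⟩ := hexk
  have hq0 : q ≠ 0 := by
    intro hz
    have := hqcoeff k0
    rw [hz, coeff_zero] at this
    exact hk0 this.symm
  have hdeg : q.natDegree < d := by
    have hd0 : 0 < d := lt_of_le_of_lt (Nat.zero_le _) k0.isLt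
    have : q.natDegree ≤ d - 1 := by
      rw [hqdef]
      apply Polynomial.natDegree_sum_le_of_forall_le
      intro k _
      exact (natDegree_C_mul_le _ _).trans (by rw [natDegree_X_pow]; omega)
    omega
  refine ⟨q, hq0, hdeg, fun n hn => ?_⟩
  have h1 : f (u n) = 0 := hfval _ (Submodule.subset_span ⟨n, hn, rfl⟩)
  have h2 : f (u n) = ∑ k : Fin d, u n k * f (Pi.single k 1) := by
    rw [LinearMap.pi_apply_eq_sum_univ f (u n)]
    refine Finset.sum_congr rfl fun k _ => ?_
    have hs : (fun j => if k = j then (1 : ℚ) else 0) = Pi.single k 1 := by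
      funext j
      rw [Pi.single_apply]
      simp [eq_comm]
    rw [hs, smul_eq_mul]
  have h3 : ∑ k ∈ Finset.range d, q.coeff k * (a (n + k) : ℚ)
      = ∑ k : Fin d, u n k * f (Pi.single k 1) := by
    rw [Finset.sum_range]
    refine Finset.sum_congr rfl fun k _ => ?_
    rw [hqcoeff k, mul_comm]
  rw [h3, ← h2, h1]
lemma Phi_map_apply (q : ℚ[X]) (a : ℕ → ℤ) (n : ℕ) :
    Phi (q.map (algebraMap ℚ ℂ)) (fun m => (a m : ℂ)) n
      = ((∑ k ∈ Finset.range (q.natDegree + 1), q.coeff k * (a (n + k) : ℚ) : ℚ) : ℂ) := by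
  rw [Phi_apply, natDegree_map_eq_of_injective (algebraMap ℚ ℂ).injective]
  push_cast
  refine Finset.sum_congr rfl fun k _ => ?_
  rw [coeff_map, eq_ratCast]

lemma exists_int_scale (q : ℚ[X]) (a : ℕ → ℤ) (n : ℕ) :
    ∃ z : ℤ, (z : ℚ) = (∏ k ∈ Finset.range (q.natDegree + 1), ((q.coeff k).den : ℤ)) *
      (∑ k ∈ Finset.range (q.natDegree + 1), q.coeff k * (a (n + k) : ℚ)) := by
  set D : ℤ := ∏ k ∈ Finset.range (q.natDegree + 1), ((q.coeff k).den : ℤ) with hD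
  have hzk : ∀ k ∈ Finset.range (q.natDegree + 1), ∃ z : ℤ, (z : ℚ) = D * q.coeff k :=
    fun k hk => den_dvd_int (Finset.dvd_prod_of_mem _ hk)
  refine ⟨∑ k ∈ (Finset.range (q.natDegree + 1)).attach,
    (hzk k.1 k.2).choose * a (n + k.1), ?_⟩
  rw [Finset.mul_sum, ← Finset.sum_attach (Finset.range (q.natDegree + 1))
    (fun k => D * (q.coeff k * (a (n + k) : ℚ)))]
  push_cast
  refine Finset.sum_congr rfl fun k _ => ?_
  have hspec : (((hzk k.1 k.2).choose : ℤ) : ℚ) = D * q.coeff k.1 := (hzk k.1 k.2).choose_spec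
  linear_combination ((a (n + k.1) : ℚ)) * hspec
set_option maxHeartbeats 1000000 in
theorem main_aux (r : ℕ) (lam : Fin r → ℂ) (hinj : Function.Injective lam)
    (halg : ∀ i, IsAlgebraic ℚ (lam i)) (hmod : ∀ i, 1 ≤ ‖lam i‖)
    (P : Fin r → Polynomial ℂ) (hP : ∀ i, P i ≠ 0)
    (x : ℕ → ℂ) (hx : ∀ n, x n = ∑ i, (P i).eval (n : ℂ) * lam i ^ n)
    (a : ℕ → ℤ) (e : ℕ → ℝ)
    (hae : ∀ n, x n = ((a n : ℤ) : ℂ) + ((e n : ℝ) : ℂ))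
    (he : Tendsto (fun n : ℕ => ((e n : ℝ) : ℂ)) atTop (nhds 0)) :
    ∀ i, ∀ γ : ℂ, Polynomial.aeval γ (minpoly ℚ (lam i)) = 0 →
      γ ∉ Set.range lam → ‖γ‖ < 1 := by
  classical
  have hsplit : ∀ (p : ℂ[X]) (n : ℕ),
      Phi p x n = Phi p (fun m => ((a m : ℤ) : ℂ)) n
        + Phi p (fun m => ((e m : ℝ) : ℂ)) n := by
    intro p n
    have hxs : x = (fun m => ((a m : ℤ) : ℂ)) + (fun m => ((e m : ℝ) : ℂ)) := by
      funext m; exact hae m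
    rw [hxs, map_add]; rfl
  have hPhixsum : ∀ (p : ℂ[X]) (n : ℕ),
      Phi p x n = ∑ i, (Tr p (lam i) (P i)).eval (n : ℂ) * lam i ^ n := by
    intro p n
    have hxs : x = ∑ i, (fun m : ℕ => (P i).eval (m : ℂ) * lam i ^ m) := by
      funext m; rw [hx m, Finset.sum_apply]
    rw [hxs, map_sum, Finset.sum_apply]
    refine Finset.sum_congr rfl fun i _ => ?_
    rw [Phi_exp]
  have hPhie : ∀ p : ℂ[X],
      Tendsto (fun n => Phi p (fun m => ((e m : ℝ) : ℂ)) n) atTop (nhds 0) :=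
    fun p => tendsto_Phi_null he p
  set dset : Set ℕ := {k | ∃ q : ℚ[X], q ≠ 0 ∧
    (∃ N, ∀ n ≥ N, ∑ j ∈ Finset.range (q.natDegree + 1), q.coeff j * (a (n + j) : ℚ) = 0) ∧
    q.natDegree = k} with hdset
  have hq0 : dset.Nonempty := by
    set q0 : ℚ[X] := ∏ i, (minpoly ℚ (lam i)) ^ ((P i).natDegree + 1) with hq0def
    have hq0ne : q0 ≠ 0 := by
      rw [hq0def]
      apply Finset.prod_ne_zero_iff.mpr
      intro i _
      exact pow_ne_zero _ (minpoly.ne_zero (halg i).isIntegral)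
    have hdvd : ∀ i, (X - C (lam i)) ^ ((P i).natDegree + 1) ∣ q0.map (algebraMap ℚ ℂ) := by
      intro i
      have h1 : X - C (lam i) ∣ (minpoly ℚ (lam i)).map (algebraMap ℚ ℂ) := by
        rw [dvd_iff_isRoot, IsRoot, eval_map, ← aeval_def]
        exact minpoly.aeval ℚ (lam i)
      have h2 : ((minpoly ℚ (lam i)).map (algebraMap ℚ ℂ)) ^ ((P i).natDegree + 1)
          ∣ q0.map (algebraMap ℚ ℂ) := by
        rw [hq0def, Polynomial.map_prod]
        have h3 := Finset.dvd_prod_of_mem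
          (fun j => ((minpoly ℚ (lam j)) ^ ((P j).natDegree + 1)).map (algebraMap ℚ ℂ))
          (Finset.mem_univ i)
        simpa [Polynomial.map_pow] using h3
      exact dvd_trans (pow_dvd_pow_of_dvd h1 _) h2
    have hkill : ∀ n, Phi (q0.map (algebraMap ℚ ℂ)) x n = 0 := by
      intro n
      have hxs : x = ∑ i, (fun m : ℕ => (P i).eval (m : ℂ) * lam i ^ m) := by
        funext m; rw [hx m, Finset.sum_apply]
      rw [hxs, map_sum, Finset.sum_apply]
      apply Finset.sum_eq_zero
      intro i _
      rw [Phi_dvd_kill (hdvd i) le_rfl]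
      rfl
    have htd : Tendsto (fun n => ((∑ j ∈ Finset.range (q0.natDegree + 1),
        q0.coeff j * (a (n + j) : ℚ) : ℚ) : ℂ)) atTop (nhds 0) := by
      have h1 := hPhie (q0.map (algebraMap ℚ ℂ))
      have h1' : Tendsto (fun n =>
          -Phi (q0.map (algebraMap ℚ ℂ)) (fun m => ((e m : ℝ) : ℂ)) n) atTop (nhds 0) := by
        simpa using h1.neg
      apply h1'.congr
      intro n
      have h2 := hsplit (q0.map (algebraMap ℚ ℂ)) n
      rw [hkill n, Phi_map_apply] at h2
      linear_combination h2
    have hD : 0 < ∏ k ∈ Finset.range (q0.natDegree + 1), ((q0.coeff k).den : ℤ) :=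
      Finset.prod_pos fun k _ => by exact_mod_cast (q0.coeff k).pos
    obtain ⟨N0, hN0⟩ := rat_int_eventually_zero hD (exists_int_scale q0 a) htd
    exact ⟨q0.natDegree, q0, hq0ne, ⟨N0, hN0⟩, rfl⟩
  have hmem := Nat.sInf_mem hq0
  simp only [hdset, Set.mem_setOf_eq] at hmem
  obtain ⟨g, hgne, ⟨Ng, hNg⟩, hgdeg⟩ := hmem
  have hgann : ∀ n, Ng ≤ n →
      Phi (g.map (algebraMap ℚ ℂ)) (fun m => ((a m : ℤ) : ℂ)) n = 0 := by
    intro n hn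
    rw [Phi_map_apply, hNg n hn, Rat.cast_zero]
  have hgroot : ∀ i, (g.map (algebraMap ℚ ℂ)).eval (lam i) = 0 := by
    intro i
    by_contra hne0
    have htend : Tendsto (fun n : ℕ => ∑ i,
        (Tr (g.map (algebraMap ℚ ℂ)) (lam i) (P i)).eval (n : ℂ) * lam i ^ n)
        atTop (nhds 0) := by
      apply (hPhie (g.map (algebraMap ℚ ℂ))).congr'
      filter_upwards [eventually_ge_atTop Ng] with n hn
      rw [← hPhixsum]
      have h2 := hsplit (g.map (algebraMap ℚ ℂ)) n
      rw [hgann n hn, zero_add] at h2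
      exact h2.symm
    exact Tr_ne_zero (hP i) hne0 (expsum_eq_zero r lam hinj hmod _ htend i)
  intro i γ hγmin hγnot
  by_contra hlt
  have habs : 1 ≤ ‖γ‖ := not_lt.mp hlt
  have hγg : (g.map (algebraMap ℚ ℂ)).eval γ = 0 := by
    obtain ⟨s, hgs⟩ := minpoly.dvd ℚ (lam i)
      (p := g) (by rw [aeval_def, ← eval_map]; exact hgroot i)
    have h1 : Polynomial.aeval γ g = 0 := by rw [hgs, map_mul, hγmin, zero_mul]
    rwa [aeval_def, ← eval_map] at h1
  obtain ⟨p, hp⟩ := dvd_iff_isRoot.mpr hγg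
  have hgCne : g.map (algebraMap ℚ ℂ) ≠ 0 :=
    (Polynomial.map_ne_zero_iff (algebraMap ℚ ℂ).injective).mpr hgne
  have hpne : p ≠ 0 := fun h => hgCne (by rw [hp, h, mul_zero])
  have hγ0 : γ ≠ 0 := by
    intro h
    rw [h, norm_zero] at habs
    linarith
  have hpdeg : p.natDegree + 1 = g.natDegree := by
    have h1 := congrArg natDegree hp
    rw [natDegree_map_eq_of_injective (algebraMap ℚ ℂ).injective] at h1
    rw [natDegree_mul (X_sub_C_ne_zero γ) hpne, natDegree_X_sub_C] at h1
    omega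
  have hbstep : ∀ n, Ng ≤ n →
      Phi p (fun m => ((a m : ℤ) : ℂ)) (n + 1)
        = γ * Phi p (fun m => ((a m : ℤ) : ℂ)) n := by
    intro n hn
    have h0 := hgann n hn
    rw [hp, Phi_mul, Phi_X_sub_C] at h0
    linear_combination h0
  have hgeo : ∀ n, Ng ≤ n → Phi p (fun m => ((a m : ℤ) : ℂ)) n
      = (Phi p (fun m => ((a m : ℤ) : ℂ)) Ng / γ ^ Ng) * γ ^ n := by
    intro n hn
    induction n, hn using Nat.le_induction with
    | base => field_simp
    | succ n hn ih => rw [hbstep n hn, ih, pow_succ]; ring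
  set c : ℂ := Phi p (fun m => ((a m : ℤ) : ℂ)) Ng / γ ^ Ng with hcdef
  have htend2 : Tendsto (fun n : ℕ => ∑ j : Fin (r + 1),
      ((Fin.snoc (fun i => Tr p (lam i) (P i)) (C (-c)) : Fin (r + 1) → ℂ[X]) j).eval (n : ℂ)
        * ((Fin.snoc lam γ : Fin (r + 1) → ℂ) j) ^ n) atTop (nhds 0) := by
    apply (hPhie p).congr'
    filter_upwards [eventually_ge_atTop Ng] with n hn
    rw [Fin.sum_univ_castSucc]
    simp only [Fin.snoc_castSucc, Fin.snoc_last]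
    have h2 := hsplit p n
    rw [hPhixsum p n, hgeo n hn] at h2
    rw [eval_C]
    linear_combination -h2
  have hsnocinj : Function.Injective (Fin.snoc lam γ : Fin (r + 1) → ℂ) :=
    snoc_injective hinj hγnot
  have hsnocmod : ∀ j, 1 ≤ ‖(Fin.snoc lam γ : Fin (r + 1) → ℂ) j‖ := by
    intro j
    refine Fin.lastCases ?_ ?_ j
    · rw [Fin.snoc_last]; exact habs
    · intro k; rw [Fin.snoc_castSucc]; exact hmod k
  have hz := expsum_eq_zero (r + 1) (Fin.snoc lam γ) hsnocinj hsnocmod _ htend2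
  have hc0 : c = 0 := by
    have h3 := hz (Fin.last r)
    rw [Fin.snoc_last] at h3
    exact neg_eq_zero.mp (C_eq_zero.mp h3)
  have hbz : ∀ n, Ng ≤ n → Phi p (fun m => ((a m : ℤ) : ℂ)) n = 0 := by
    intro n hn
    rw [hgeo n hn, hc0, zero_mul]
  set d : ℕ := g.natDegree with hddef
  have hvne : (fun k : Fin d => p.coeff (k : ℕ)) ≠ 0 := by
    intro h0
    have h1 := congrFun h0 ⟨p.natDegree, by omega⟩
    simp only [Pi.zero_apply] at h1
    exact hpne (leadingCoeff_eq_zero.mp h1)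
  have hann2 : ∀ n, Ng ≤ n →
      ∑ k : Fin d, p.coeff (k : ℕ) * (a (n + (k : ℕ)) : ℂ) = 0 := by
    intro n hn
    have h1 : ∑ k ∈ Finset.range (p.natDegree + 1), p.coeff k * (a (n + k) : ℂ)
        = ∑ k ∈ Finset.range d, p.coeff k * (a (n + k) : ℂ) := by
      apply Finset.sum_subset
      · intro k hk
        rw [Finset.mem_range] at hk ⊢
        omega
      · intro k _ hk
        rw [Finset.mem_range] at hk
        rw [coeff_eq_zero_of_natDegree_lt (by omega), zero_mul]
    calc ∑ k : Fin d, p.coeff (k : ℕ) * (a (n + (k : ℕ)) : ℂ)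
        = ∑ k ∈ Finset.range d, p.coeff k * (a (n + k) : ℂ) :=
          (Finset.sum_range (fun k => p.coeff k * (a (n + k) : ℂ))).symm
      _ = ∑ k ∈ Finset.range (p.natDegree + 1), p.coeff k * (a (n + k) : ℂ) := h1.symm
      _ = Phi p (fun m => ((a m : ℤ) : ℂ)) n := (Phi_apply p (fun m => ((a m : ℤ) : ℂ)) n).symm
      _ = 0 := hbz n hn
  obtain ⟨q, hqne, hqdeg, hqrec⟩ :=
    exists_rat_ann a Ng (fun k : Fin d => p.coeff (k : ℕ)) hvne hann2
  have hqrec2 : ∀ n ≥ Ng,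
      ∑ j ∈ Finset.range (q.natDegree + 1), q.coeff j * (a (n + j) : ℚ) = 0 := by
    intro n hn
    have h1 : ∑ j ∈ Finset.range (q.natDegree + 1), q.coeff j * (a (n + j) : ℚ)
        = ∑ j ∈ Finset.range d, q.coeff j * (a (n + j) : ℚ) := by
      apply Finset.sum_subset
      · intro k hk
        rw [Finset.mem_range] at hk ⊢
        omega
      · intro k _ hk
        rw [Finset.mem_range] at hk
        rw [coeff_eq_zero_of_natDegree_lt (by omega), zero_mul]
    rw [h1]
    exact hqrec n hn
  have hqd : q.natDegree ∈ dset := by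
    rw [hdset]
    exact ⟨q, hqne, ⟨Ng, hqrec2⟩, rfl⟩
  have hle := Nat.sInf_le hqd
  rw [hdset] at hle
  omega

end PisotAux

open PisotAux Filter in
/-- Generalized Pisot theorem (Körnerup–Mauduit): if `λ₁,…,λ_r` are distinct algebraic numbers
of modulus `≥ 1`, `P₁,…,P_r` are nonzero complex polynomials, `Σ Pᵢ(n)λᵢⁿ` is real for all `n`
and its distance to the nearest integer tends to `0`, then `{λ₁,…,λ_r}` is a Pisot family. -/
theorem pisot_family_of_tendsto (r : ℕ) (hr : 0 < r) (lam : Fin r → ℂ)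
    (hinj : Function.Injective lam)
    (halg : ∀ i, IsAlgebraic ℚ (lam i))
    (hmod : ∀ i, 1 ≤ ‖lam i‖)
    (P : Fin r → Polynomial ℂ) (hP : ∀ i, P i ≠ 0)
    (hreal : ∀ n : ℕ, (∑ i, (P i).eval (n : ℂ) * lam i ^ n).im = 0)
    (hconv : Filter.Tendsto
      (fun n : ℕ =>
        |(∑ i, (P i).eval (n : ℂ) * lam i ^ n).re -
          (round ((∑ i, (P i).eval (n : ℂ) * lam i ^ n).re) : ℝ)|)
      Filter.atTop (nhds 0)) :
    ∀ i, ∀ γ : ℂ, Polynomial.aeval γ (minpoly ℚ (lam i)) = 0 →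
      γ ∉ Set.range lam → ‖γ‖ < 1 := by
  apply PisotAux.main_aux r lam hinj halg hmod P hP
    (fun n => ∑ i, (P i).eval (n : ℂ) * lam i ^ n) (fun n => rfl)
    (fun n => round ((∑ i, (P i).eval (n : ℂ) * lam i ^ n).re))
    (fun n => (∑ i, (P i).eval (n : ℂ) * lam i ^ n).re -
      ((round ((∑ i, (P i).eval (n : ℂ) * lam i ^ n).re) : ℤ) : ℝ))
  · intro n
    apply Complex.ext
    · simp
    · simp [hreal n]
  · rw [tendsto_zero_iff_norm_tendsto_zero]
    apply hconv.congr
    intro n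
    rw [Complex.norm_real, Real.norm_eq_abs]
end
end

section
/- For every real algebraic integer η > 1 there exists a Delone set X ⊆ ℝ such that the additive subgroup generated by X is finitely generated (indeed X ⊆ ℤ[η], which is a finitely generated ℤ-module) and ηX ⊆ X. -/
noncomputable section

namespace DeloneInflation

/-- The small separation parameter. -/
def delta (η : ℝ) : ℝ := min (η - 1) 1

/-- Blocks of the Delone set: `BB η k ⊆ [η^k, η^(k+1) - δ]`. -/
def BB (η : ℝ) : ℕ → Set ℝ
  | 0 => {x | (∃ m : ℤ, (m : ℝ) = x) ∧ 1 ≤ x ∧ x ≤ η - delta η}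
  | (k+1) => ((fun y => η * y) '' BB η k) ∪
      {x | (∃ m : ℤ, (m : ℝ) = x) ∧ η ^ (k+1) ≤ x ∧ x ≤ η ^ (k+2) - delta η ∧
        ∀ y ∈ BB η k, 1 ≤ |x - η * y|}

variable {η : ℝ}

lemma delta_pos (hη : 1 < η) : 0 < delta η := by
  simp only [delta, lt_min_iff]
  constructor <;> linarith

lemma int_sep {m n : ℤ} (h : (m : ℝ) ≠ (n : ℝ)) : 1 ≤ |(m : ℝ) - (n : ℝ)| := by
  have hmn : m ≠ n := fun hh => h (by rw [hh])
  have h1 : (1 : ℤ) ≤ |m - n| := Int.one_le_abs (sub_ne_zero.mpr hmn)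
  have h2 : ((1:ℤ) : ℝ) ≤ ((|m - n| : ℤ) : ℝ) := Int.cast_le.mpr h1
  push_cast at h2
  simpa using h2

lemma delta_le_one : delta η ≤ 1 := min_le_right _ _

lemma delta_le (hη : 1 < η) : delta η ≤ η - 1 := min_le_left _ _

lemma BB_subset (hη : 1 < η) : ∀ k, ∀ x ∈ BB η k, η ^ k ≤ x ∧ x ≤ η ^ (k+1) - delta η := by
  intro k
  induction k with
  | zero => intro x hx; simpa [BB] using ⟨hx.2.1, hx.2.2⟩
  | succ k ih =>
    intro x hx
    rcases hx with ⟨y, hy, rfl⟩ | hx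
    · obtain ⟨h1, h2⟩ := ih y hy
      constructor
      · calc η ^ (k+1) = η * η ^ k := by ring
          _ ≤ η * y := by nlinarith
      · have h3 : delta η ≤ η * delta η := by nlinarith [delta_pos hη]
        have hp : η * (η ^ (k+1) - delta η) = η ^ (k+2) - η * delta η := by ring
        calc η * y ≤ η * (η ^ (k+1) - delta η) := by nlinarith
          _ = η ^ (k+2) - η * delta η := hp
          _ ≤ η ^ (k+2) - delta η := by linarith
    · exact ⟨hx.2.1, hx.2.2.1⟩

lemma BB_pow (hη : 1 < η) : ∀ k, η ^ k ∈ BB η k := by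
  intro k
  induction k with
  | zero =>
    refine ⟨⟨1, by norm_num⟩, by norm_num, ?_⟩
    have := delta_le hη; simp; linarith
  | succ k ih => exact Or.inl ⟨η ^ k, ih, by ring⟩

lemma BB_sep (hη : 1 < η) : ∀ k, ∀ x ∈ BB η k, ∀ y ∈ BB η k, x ≠ y → 1 ≤ |x - y| := by
  intro k
  induction k with
  | zero =>
    rintro x ⟨⟨m, rfl⟩, -, -⟩ y ⟨⟨n, rfl⟩, -, -⟩ hne
    exact int_sep hne
  | succ k ih =>
    rintro x hx y hy hne
    rcases hx with ⟨a, ha, rfl⟩ | hx <;> rcases hy with ⟨b, hb, rfl⟩ | hy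
    · have hab : a ≠ b := fun h => hne (by rw [h])
      have h1 : 1 ≤ |a - b| := ih a ha b hb hab
      have : η * a - η * b = η * (a - b) := by ring
      rw [this, abs_mul, abs_of_pos (by linarith : (0:ℝ) < η)]
      nlinarith [abs_nonneg (a - b)]
    · have := hy.2.2.2 a ha
      rwa [abs_sub_comm]
    · exact hx.2.2.2 b hb
    · rcases hx.1 with ⟨m, rfl⟩; rcases hy.1 with ⟨n, rfl⟩
      exact int_sep hne

lemma BB_adjoin (hη : 1 < η) : ∀ k, ∀ x ∈ BB η k, x ∈ Algebra.adjoin ℤ ({η} : Set ℝ) := by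
  intro k
  induction k with
  | zero =>
    rintro x ⟨⟨m, rfl⟩, -, -⟩
    exact_mod_cast Subalgebra.intCast_mem _ m
  | succ k ih =>
    rintro x hx
    rcases hx with ⟨a, ha, rfl⟩ | hx
    · exact mul_mem (Algebra.subset_adjoin rfl) (ih a ha)
    · rcases hx.1 with ⟨m, rfl⟩
      exact_mod_cast Subalgebra.intCast_mem _ m

lemma BB_dense (hη : 1 < η) (k : ℕ) (z : ℝ) (h1 : η ^ k ≤ z) (h2 : z ≤ η ^ (k+1)) :
    ∃ j, ∃ x ∈ BB η j, |z - x| ≤ 3 := by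
  have hδ1 : delta η ≤ 1 := delta_le_one
  by_cases hA : z ≤ η ^ k + 3
  · exact ⟨k, η ^ k, BB_pow hη k, by rw [abs_sub_le_iff]; constructor <;> linarith⟩
  by_cases hB : η ^ (k+1) - 3 ≤ z
  · exact ⟨k+1, η ^ (k+1), BB_pow hη (k+1), by rw [abs_sub_le_iff]; constructor <;> linarith⟩
  push_neg at hA hB
  have hfl1 : (⌊z⌋ : ℝ) ≤ z := Int.floor_le z
  have hfl2 : z - 1 < (⌊z⌋ : ℝ) := by have := Int.lt_floor_add_one z; linarith
  cases k with
  | zero =>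
    simp only [pow_zero] at h1 hA
    simp only [zero_add, pow_one] at hB
    exact ⟨0, (⌊z⌋ : ℝ), ⟨⟨⌊z⌋, rfl⟩, by linarith, by linarith⟩,
      by rw [abs_sub_le_iff]; constructor <;> linarith⟩
  | succ k =>
    by_cases hC : ∃ y ∈ BB η k, |z - η * y| ≤ 2
    · obtain ⟨y, hy, hzy⟩ := hC
      exact ⟨k+1, η * y, Or.inl ⟨y, hy, rfl⟩, by linarith⟩
    push_neg at hC
    refine ⟨k+1, (⌊z⌋ : ℝ), Or.inr ⟨⟨⌊z⌋, rfl⟩, by linarith, by linarith, ?_⟩, by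
      rw [abs_sub_le_iff]; constructor <;> linarith⟩
    intro y hy
    have h4 := hC y hy
    have h5 : |z - η * y| ≤ |z - (⌊z⌋:ℝ)| + |(⌊z⌋:ℝ) - η * y| := abs_sub_le _ _ _
    have h6 : |z - (⌊z⌋:ℝ)| ≤ 1 := by rw [abs_sub_le_iff]; constructor <;> linarith
    linarith

end DeloneInflation

open DeloneInflation in
/-- For every real algebraic integer `η > 1` there exists a Delone set `X ⊆ ℝ` with
`X ⊆ ℤ[η]`, whose generated additive subgroup is finitely generated, and with `ηX ⊆ X`. -/
theorem exists_delone_set_with_inflation (η : ℝ) (hη : 1 < η) (hint : IsIntegral ℤ η) :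
    ∃ X : Set ℝ,
      ((∃ r > 0, ∀ x ∈ X, ∀ y ∈ X, x ≠ y → 2 * r ≤ |x - y|) ∧
        (∃ R > 0, ∀ z : ℝ, ∃ x ∈ X, |z - x| ≤ R)) ∧
      (∀ x ∈ X, x ∈ Algebra.adjoin ℤ ({η} : Set ℝ)) ∧
      (AddSubgroup.closure X).FG ∧
      (∀ x ∈ X, η * x ∈ X) := by
  classical
  set X : Set ℝ := {x | x = 0 ∨ (∃ k, x ∈ BB η k) ∨ (∃ k, -x ∈ BB η k)} with hX
  have hηpos : (0:ℝ) < η := by linarith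
  have hδpos := delta_pos hη
  have hδ1 : delta η ≤ 1 := delta_le_one
  -- every element of a block is ≥ 1
  have hge1 : ∀ k, ∀ x ∈ BB η k, 1 ≤ x := by
    intro k x hx
    have := (BB_subset hη k x hx).1
    have h1 : (1:ℝ) ≤ η ^ k := one_le_pow₀ (le_of_lt hη)
    linarith
  -- cross-block separation
  have hcross : ∀ j k, j < k → ∀ x ∈ BB η j, ∀ y ∈ BB η k, delta η ≤ |x - y| := by
    intro j k hjk x hx y hy
    have h1 := (BB_subset hη j x hx).2
    have h2 := (BB_subset hη k y hy).1
    have h3 : η ^ (j+1) ≤ η ^ k := pow_le_pow_right₀ (le_of_lt hη) hjk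
    rw [abs_sub_comm, abs_of_nonneg (by linarith)]
    linarith
  have hsepB : ∀ j k, ∀ x ∈ BB η j, ∀ y ∈ BB η k, x ≠ y → delta η ≤ |x - y| := by
    intro j k x hx y hy hne
    rcases lt_trichotomy j k with h | rfl | h
    · exact hcross j k h x hx y hy
    · have := BB_sep hη j x hx y hy hne; linarith
    · rw [abs_sub_comm]; exact hcross k j h y hy x hx
  refine ⟨X, ⟨⟨delta η / 2, by linarith, ?_⟩, ⟨3, by norm_num, ?_⟩⟩, ?_, ?_, ?_⟩
  · -- uniform discreteness
    intro x hx y hy hne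
    rw [(by ring : 2 * (delta η / 2) = delta η)]
    rcases hx with rfl | ⟨j, hj⟩ | ⟨j, hj⟩ <;> rcases hy with rfl | ⟨k, hk⟩ | ⟨k, hk⟩
    · exact absurd rfl hne
    · have := hge1 k y hk; rw [abs_sub_comm, abs_of_nonneg (by linarith)]; linarith
    · have := hge1 k (-y) hk; rw [abs_of_nonneg (by linarith)]; linarith
    · have := hge1 j x hj; rw [abs_of_nonneg (by linarith)]; linarith
    · exact hsepB j k x hj y hk hne
    · have h1 := hge1 j x hj; have h2 := hge1 k (-y) hk
      rw [abs_of_nonneg (by linarith)]; linarith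
    · have := hge1 j (-x) hj; rw [abs_sub_comm, abs_of_nonneg (by linarith)]; linarith
    · have h1 := hge1 j (-x) hj; have h2 := hge1 k y hk
      rw [abs_sub_comm, abs_of_nonneg (by linarith)]; linarith
    · have hne' : (-x) ≠ (-y) := fun h => hne (neg_injective h)
      have h9 := hsepB j k (-x) hj (-y) hk hne'
      rw [abs_sub_comm]
      rwa [(by ring : -x - -y = y - x)] at h9
  · -- relative density
    have key : ∀ z : ℝ, 1 ≤ z → ∃ x ∈ X, |z - x| ≤ 3 := by
      intro z hz
      have hex : ∃ n : ℕ, z < η ^ n := pow_unbounded_of_one_lt z hη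
      have hn : z < η ^ Nat.find hex := Nat.find_spec hex
      have hn0 : Nat.find hex ≠ 0 := by
        intro h; rw [h, pow_zero] at hn; linarith
      obtain ⟨k, hkeq⟩ := Nat.exists_eq_succ_of_ne_zero hn0
      have hk : η ^ k ≤ z := le_of_not_gt (Nat.find_min hex (by omega))
      rw [hkeq] at hn
      obtain ⟨j, x, hxB, hbound⟩ := BB_dense hη k z hk (le_of_lt hn)
      exact ⟨x, Or.inr (Or.inl ⟨j, hxB⟩), hbound⟩
    intro z
    rcases le_or_gt 1 z with hz | hz
    · obtain ⟨x, hx, hb⟩ := key z hz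
      exact ⟨x, hx, hb⟩
    rcases le_or_gt z (-1) with hz' | hz'
    · obtain ⟨x, hx, hb⟩ := key (-z) (by linarith)
      refine ⟨-x, ?_, ?_⟩
      · rcases hx with h0 | ⟨k, hk⟩ | ⟨k, hk⟩
        · exact Or.inl (by rw [h0]; ring)
        · exact Or.inr (Or.inr ⟨k, by simpa using hk⟩)
        · exact Or.inr (Or.inl ⟨k, by simpa using hk⟩)
      · rw [(by ring : z - -x = -(-z - x)), abs_neg]; exact hb
    · exact ⟨0, Or.inl rfl, by rw [abs_sub_le_iff]; constructor <;> linarith⟩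
  · -- contained in ℤ[η]
    rintro x (rfl | ⟨k, hk⟩ | ⟨k, hk⟩)
    · exact Subalgebra.zero_mem _
    · exact BB_adjoin hη k x hk
    · have := BB_adjoin hη k (-x) hk
      simpa using neg_mem this
  · -- finitely generated
    have hXadj : X ⊆ (Subalgebra.toSubmodule (Algebra.adjoin ℤ ({η} : Set ℝ)) : Set ℝ) := by
      rintro x (rfl | ⟨k, hk⟩ | ⟨k, hk⟩)
      · exact Subalgebra.zero_mem _
      · exact BB_adjoin hη k x hk
      · have := BB_adjoin hη k (-x) hk
        simpa using neg_mem this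
    set M : Submodule ℤ ℝ := Subalgebra.toSubmodule (Algebra.adjoin ℤ ({η} : Set ℝ)) with hM
    have hMfg : M.FG := hint.fg_adjoin_singleton
    haveI : IsNoetherian ℤ M := isNoetherian_of_fg_of_noetherian M hMfg
    have hle : Submodule.span ℤ X ≤ M := Submodule.span_le.mpr hXadj
    have hPfg : (Submodule.span ℤ X).FG := by
      have h1 : ((Submodule.span ℤ X).comap M.subtype).FG := IsNoetherian.noetherian _
      have h2 : Submodule.map M.subtype ((Submodule.span ℤ X).comap M.subtype)
          = Submodule.span ℤ X := by
        rw [Submodule.map_comap_subtype]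
        exact inf_eq_right.mpr hle
      rw [← h2]
      exact Submodule.FG.map _ h1
    have := (Submodule.fg_iff_addSubgroup_fg (Submodule.span ℤ X)).mp hPfg
    rwa [Submodule.span_int_eq_addSubgroupClosure] at this
  · -- inflation
    rintro x (rfl | ⟨k, hk⟩ | ⟨k, hk⟩)
    · exact Or.inl (by ring)
    · exact Or.inr (Or.inl ⟨k+1, Or.inl ⟨x, hk, rfl⟩⟩)
    · refine Or.inr (Or.inr ⟨k+1, Or.inl ⟨-x, hk, by ring⟩⟩)
end
end
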